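/- In the SU(2)_k fusion ring, the quantum dimensions d_a = sin((a+1)π/(k+2)) / sin(π/(k+2)) satisfy the fusion-compatibility identity d_a · d_b = Σ_{c} d_c, where the sum runs over c with |a−b| ≤ c ≤ min(a+b, 2k−a−b) and c ≡ a+b (mod 2). -/

import Mathlib

open Real

/-- The quantum dimension of the sector `a` of `SU(2)_k`. -/
noncomputable def su2d (k a : ℕ) : ℝ :=
  Real.sin ((a + 1) * Real.pi / (k + 2)) / Real.sin (Real.pi / (k + 2))

/-- The fusion rule of `SU(2)_k`: `c` appears in `a ⊗ b` iff
`|a - b| ≤ c ≤ min (a+b) (2k - a - b)` and `c ≡ a + b (mod 2)`. -/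
def su2Allowed (k a b c : ℕ) : Prop :=
  a ≤ b + c ∧ b ≤ a + c ∧ c ≤ min (a + b) (2 * k - (a + b)) ∧ c % 2 = (a + b) % 2

instance : ∀ k a b c, Decidable (su2Allowed k a b c) := fun _ _ _ _ => by
  unfold su2Allowed; infer_instance

/-- In `SU(2)_k` the quantum dimensions satisfy the
fusion-compatibility identity `d_a · d_b = Σ_c d_c`, the sum running over
the fusion channels of `a ⊗ b`. -/
theorem su2_quantum_dimension_fusion (k a b : ℕ) (hk : 1 ≤ k)
    (ha : a ≤ k) (hb : b ≤ k) :
    su2d k a * su2d k b =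
      ∑ c ∈ (Finset.range (k + 1)).filter (fun c => su2Allowed k a b c), su2d k c := by
  set m := max a b - min a b with hm
  set M := min (a + b) (2 * k - (a + b)) with hM
  set N := (M - m) / 2 with hN
  have hmM : m ≤ M := by omega
  have hMk : M ≤ k := by omega
  have hpar : m % 2 = (a + b) % 2 := by omega
  have hMpar : M % 2 = (a + b) % 2 := by omega
  have hNM : m + 2 * (N + 1) = M + 2 := by omega
  -- positivity of the denominator sine
  have hθpos : 0 < Real.pi / (k + 2) := by positivity
  have hθlt : Real.pi / (k + 2) < Real.pi := by
    rw [div_lt_iff₀ (by positivity)]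
    nlinarith [Real.pi_pos]
  have hs : 0 < Real.sin (Real.pi / (k + 2)) :=
    Real.sin_pos_of_pos_of_lt_pi hθpos hθlt
  -- reindex the filtered sum
  have hreindex :
      ∑ c ∈ (Finset.range (k + 1)).filter (fun c => su2Allowed k a b c), su2d k c
        = ∑ j ∈ Finset.range (N + 1), su2d k (m + 2 * j) := by
    refine Finset.sum_nbij' (i := fun c => (c - m) / 2) (j := fun j => m + 2 * j)
      ?_ ?_ ?_ ?_ ?_
    · intro c hc
      replace hc := Finset.mem_filter.mp hc
      simp only [Finset.mem_filter, Finset.mem_range, su2Allowed] at hc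
      simp only [Finset.mem_range]
      omega
    · intro j hj
      simp only [Finset.mem_range] at hj
      refine Finset.mem_filter.mpr ?_
      simp only [Finset.mem_filter, Finset.mem_range, su2Allowed]
      omega
    · intro c hc
      replace hc := Finset.mem_filter.mp hc
      simp only [Finset.mem_filter, Finset.mem_range, su2Allowed] at hc
      show m + 2 * ((c - m) / 2) = c
      omega
    · intro j hj
      simp only [Finset.mem_range] at hj
      show (m + 2 * j - m) / 2 = j
      omega
    · intro c hc
      replace hc := Finset.mem_filter.mp hc
      simp only [Finset.mem_filter, Finset.mem_range, su2Allowed] at hc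
      show su2d k c = su2d k (m + 2 * ((c - m) / 2))
      congr 1
      omega
  rw [hreindex]
  -- telescoping sum
  have tele :
      ∑ j ∈ Finset.range (N + 1),
        (2 * Real.sin (Real.pi / (k + 2)) *
          Real.sin (((m : ℝ) + 2 * j + 1) * Real.pi / (k + 2)))
        = Real.cos ((m : ℝ) * Real.pi / (k + 2))
          - Real.cos (((m : ℝ) + 2 * (N + 1)) * Real.pi / (k + 2)) := by
    have h := Finset.sum_range_sub'
      (f := fun j : ℕ => Real.cos (((m : ℝ) + 2 * j) * Real.pi / (k + 2))) (n := N + 1)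
    simp only [Nat.cast_zero, mul_zero, add_zero] at h
    rw [show ((m : ℝ) + 2 * ((N : ℝ) + 1)) * Real.pi / (k + 2)
      = ((m : ℝ) + 2 * ((N + 1 : ℕ) : ℝ)) * Real.pi / (k + 2) by push_cast; ring, ← h]
    refine Finset.sum_congr rfl fun j _ => ?_
    have h1 : (((m : ℝ) + 2 * j) * Real.pi / (k + 2)
        + ((m : ℝ) + 2 * ((j + 1 : ℕ) : ℝ)) * Real.pi / (k + 2)) / 2
        = ((m : ℝ) + 2 * j + 1) * Real.pi / (k + 2) := by push_cast; ring
    have h2 : (((m : ℝ) + 2 * j) * Real.pi / (k + 2)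
        - ((m : ℝ) + 2 * ((j + 1 : ℕ) : ℝ)) * Real.pi / (k + 2)) / 2
        = -(Real.pi / (k + 2)) := by push_cast; ring
    rw [Real.cos_sub_cos, h1, h2, Real.sin_neg]
    push_cast
    ring
  -- rewrite the endpoint cosines
  have hend : Real.cos (((m : ℝ) + 2 * (N + 1)) * Real.pi / (k + 2))
      = Real.cos (((a : ℝ) + (b : ℝ) + 2) * Real.pi / (k + 2)) := by
    have hcast : ((m : ℝ) + 2 * ((N : ℝ) + 1)) = ((M : ℝ) + 2) := by
      exact_mod_cast hNM
    rw [hcast]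
    rcases le_or_gt (a + b) (2 * k - (a + b)) with h | h
    · have hMab : M = a + b := by omega
      rw [hMab]
      congr 1
      push_cast
      ring
    · have hM2 : M = 2 * k - (a + b) := by omega
      have habk : a + b ≤ 2 * k := by omega
      have hcast2 : ((M : ℝ) + 2) = 2 * ((k : ℝ) + 2) - ((a : ℝ) + b + 2) := by
        rw [hM2]; push_cast [habk]; ring
      rw [hcast2]
      have h2pi : (2 * ((k : ℝ) + 2) - ((a : ℝ) + b + 2)) * Real.pi / (k + 2)
          = 2 * Real.pi - ((a : ℝ) + b + 2) * Real.pi / (k + 2) := by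
        field_simp
      rw [h2pi, Real.cos_sub, Real.cos_two_pi, Real.sin_two_pi]
      ring
  have hstart : Real.cos ((m : ℝ) * Real.pi / (k + 2))
      = Real.cos (((a : ℝ) - (b : ℝ)) * Real.pi / (k + 2)) := by
    rcases le_total b a with h | h
    · have : (m : ℝ) = (a : ℝ) - b := by
        rw [hm]; push_cast [Nat.max_eq_left h, Nat.min_eq_right h, h]; ring
      rw [this]
    · have : (m : ℝ) = (b : ℝ) - a := by
        rw [hm]; push_cast [Nat.max_eq_right h, Nat.min_eq_left h, h]; ring
      rw [this]
      rw [show ((b : ℝ) - a) * Real.pi / (k + 2)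
          = -(((a : ℝ) - b) * Real.pi / (k + 2)) by ring, Real.cos_neg]
  -- the product-to-sum identity for the left-hand side
  have hprod : Real.cos (((a : ℝ) - (b : ℝ)) * Real.pi / (k + 2))
      - Real.cos (((a : ℝ) + (b : ℝ) + 2) * Real.pi / (k + 2))
      = 2 * Real.sin (((a : ℝ) + 1) * Real.pi / (k + 2))
          * Real.sin (((b : ℝ) + 1) * Real.pi / (k + 2)) := by
    have h1 : ((((a : ℝ) - b) * Real.pi / (k + 2))
        + (((a : ℝ) + b + 2) * Real.pi / (k + 2))) / 2
        = ((a : ℝ) + 1) * Real.pi / (k + 2) := by ring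
    have h2 : ((((a : ℝ) - b) * Real.pi / (k + 2))
        - (((a : ℝ) + b + 2) * Real.pi / (k + 2))) / 2
        = -(((b : ℝ) + 1) * Real.pi / (k + 2)) := by ring
    rw [Real.cos_sub_cos, h1, h2, Real.sin_neg]
    ring
  -- assemble everything
  have key : 2 * Real.sin (Real.pi / (k + 2)) *
      ∑ j ∈ Finset.range (N + 1),
        Real.sin (((m : ℝ) + 2 * j + 1) * Real.pi / (k + 2))
      = 2 * Real.sin (((a : ℝ) + 1) * Real.pi / (k + 2))
          * Real.sin (((b : ℝ) + 1) * Real.pi / (k + 2)) := by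
    rw [← hprod, ← hstart, ← hend, ← tele, Finset.mul_sum]
  have hs' : Real.sin (Real.pi / (k + 2)) ≠ 0 := ne_of_gt hs
  unfold su2d
  rw [div_mul_div_comm, div_eq_iff (by positivity)]
  have hbody : ∀ j ∈ Finset.range (N + 1),
      Real.sin ((((m + 2 * j : ℕ) : ℝ) + 1) * Real.pi / (k + 2))
        / Real.sin (Real.pi / (k + 2))
      = Real.sin (((m : ℝ) + 2 * j + 1) * Real.pi / (k + 2))
        / Real.sin (Real.pi / (k + 2)) := by
    intro j _
    congr 3
    push_cast
    ring
  rw [Finset.sum_congr rfl hbody, ← Finset.sum_div]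
  have hfinal : (∑ j ∈ Finset.range (N + 1),
        Real.sin (((m : ℝ) + 2 * j + 1) * Real.pi / (k + 2)))
        / Real.sin (Real.pi / (k + 2))
        * (Real.sin (Real.pi / (k + 2)) * Real.sin (Real.pi / (k + 2)))
      = Real.sin (Real.pi / (k + 2)) * ∑ j ∈ Finset.range (N + 1),
          Real.sin (((m : ℝ) + 2 * j + 1) * Real.pi / (k + 2)) := by
    rw [div_mul_eq_mul_div, div_eq_iff hs']
    ring
  rw [hfinal]
  linarith [key]
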